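/- Let n ≥ 2 and let G be a group with elements b_1,…,b_{n-1}, t_1,…,t_n, z satisfying: the t_i pairwise commute; z * t_i * z⁻¹ = t_{i+1} for 1 ≤ i ≤ n-1 and z * t_n * z⁻¹ = t_1; z = b_1 * ⋯ * b_{n-1} * t_n; and z^n = 1. Then (b_1 * ⋯ * b_{n-1})^n = (t_1 * t_2 * ⋯ * t_n)⁻¹. -/

import Mathlib

theorem stmt_11 (n : ℕ) (hn : 2 ≤ n) (G : Type*) [Group G]
    (b t : ℕ → G) (z : G)
    (htcomm : ∀ i j, 1 ≤ i → i ≤ n → 1 ≤ j → j ≤ n → t i * t j = t j * t i)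
    (hconj : ∀ i, 1 ≤ i → i ≤ n - 1 → z * t i * z⁻¹ = t (i + 1))
    (hconjn : z * t n * z⁻¹ = t 1)
    (hz : z = (((List.range (n - 1)).map fun k => b (k + 1)).prod) * t n)
    (hzn : z ^ n = 1) :
    (((List.range (n - 1)).map fun k => b (k + 1)).prod) ^ n =
      (((List.range n).map fun k => t (k + 1)).prod)⁻¹ := by
  have hB : (((List.range (n - 1)).map fun k => b (k + 1)).prod) = z * (t n)⁻¹ := by
    rw [hz]; group
  have hconj' : ∀ j, 2 ≤ j → j ≤ n → z⁻¹ * t j * z = t (j - 1) := by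
    intro j h2 hjn
    have h := hconj (j - 1) (by omega) (by omega)
    have hj : j - 1 + 1 = j := by omega
    rw [hj] at h
    rw [← h]; group
  have key : ∀ m, m ≤ n → (z * (t n)⁻¹) ^ m =
      z ^ m * (((List.range m).map fun k => t (n - m + 1 + k)).prod)⁻¹ := by
    intro m
    induction m with
    | zero => simp
    | succ m ih =>
      intro hm1
      have hmn : m ≤ n := by omega
      set Pm := ((List.range m).map fun k => t (n - m + 1 + k)).prod with hPm
      set Qm := ((List.range m).map fun k => t (n - (m + 1) + 1 + k)).prod with hQm
      -- step 1 : product splitting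
      have hsplit : ((List.range (m + 1)).map fun k => t (n - (m + 1) + 1 + k)).prod
          = Qm * t n := by
        have hidx : n - (m + 1) + 1 + m = n := by omega
        rw [List.range_succ, List.map_append, List.prod_append]
        simp [hidx, hQm]
      -- step 2 : conjugation
      have hconjP : z⁻¹ * Pm * z = Qm := by
        have hmap : ((List.range m).map fun k => t (n - m + 1 + k)).map
            (fun x => z⁻¹ * x * z) = (List.range m).map fun k => t (n - (m + 1) + 1 + k) := by
          rw [List.map_map]
          apply List.map_congr_left
          intro k hk
          have hk' : k < m := List.mem_range.mp hk
          have h2 : 2 ≤ n - m + 1 + k := by omega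
          have h3 : n - m + 1 + k ≤ n := by omega
          have := hconj' (n - m + 1 + k) h2 h3
          simp only [Function.comp]
          rw [this]
          congr 1
          omega
        have hhom := map_list_prod ((MulAut.conj z⁻¹) : G ≃* G).toMonoidHom
          ((List.range m).map fun k => t (n - m + 1 + k))
        simp only [MulEquiv.toMonoidHom_eq_coe, MonoidHom.coe_coe, MulAut.conj_apply,
          inv_inv] at hhom
        rw [hPm, hQm, ← hmap, hhom]
        congr 1
        apply List.map_congr_left
        intro x _
        simp [MulAut.conj_apply]
      -- step 3 : commutation
      have hc : Commute Qm (t n) := by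
        rw [hQm]
        apply Commute.list_prod_left
        intro y hy
        simp only [List.mem_map, List.mem_range] at hy
        obtain ⟨k, hk, rfl⟩ := hy
        exact (htcomm (n - (m + 1) + 1 + k) n (by omega) (by omega) (by omega) (by omega))
      rw [hsplit]
      calc (z * (t n)⁻¹) ^ (m + 1) = (z * (t n)⁻¹) ^ m * (z * (t n)⁻¹) := by rw [pow_succ]
        _ = z ^ m * Pm⁻¹ * (z * (t n)⁻¹) := by rw [ih hmn]
        _ = z ^ m * z * (z⁻¹ * Pm * z)⁻¹ * (t n)⁻¹ := by group
        _ = z ^ (m + 1) * Qm⁻¹ * (t n)⁻¹ := by rw [hconjP, pow_succ]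
        _ = z ^ (m + 1) * (Qm * t n)⁻¹ := by
            rw [mul_inv_rev, ← (hc.inv_inv).eq, mul_assoc]
  have hfinal := key n le_rfl
  rw [hB, hfinal, hzn, one_mul]
  congr 1
  congr 1
  apply List.map_congr_left
  intro k hk
  congr 1
  omega
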